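/- arXiv:2111.07481 — 5 statements merged into one kernel-verified Lean document; each statement's English description precedes it below -/
import Mathlib

section
/- In any greedy run on a 2NC-TAP instance, for each non-leaf node u of T the assigned weights are nondecreasing along the order of assignment, i.e., wgt(𝒫̂^1_u) ≤ wgt(𝒫̂^2_u) ≤ … ≤ wgt(𝒫̂^{ν(u)−1}_u); equivalently, y(𝒫) ≥ 0 for every non-leaf node u and every partition 𝒫 ∈ Ptn⊇(comps(T−u)). -/
open scoped Classical
open Finset

namespace TwoNCTAP

variable {V : Type*}

/-- The graph `H` with the vertex `u` "deleted": all edges incident to `u` are removed,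
so that `u` becomes an isolated vertex. -/
def delVert (H : SimpleGraph V) (u : V) : SimpleGraph V where
  Adj a b := H.Adj a b ∧ a ≠ u ∧ b ≠ u
  symm := ⟨by rintro a b ⟨h, ha, hb⟩; exact ⟨h.symm, hb, ha⟩⟩
  loopless := ⟨by rintro a ⟨h, -, -⟩; exact H.irrefl h⟩

/-- The partition of `V ∖ {u}` into the vertex sets of the connected components of `H − u`. -/
def compPartition (H : SimpleGraph V) (u : V) : Set (Set V) :=
  {S | ∃ v, v ≠ u ∧ S = {w | (delVert H u).Reachable v w}}

/-- `P` is a partition of the set `S`. -/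
def IsPartitionOf (P : Set (Set V)) (S : Set V) : Prop :=
  (∀ B ∈ P, B.Nonempty) ∧ (∀ B ∈ P, B ⊆ S) ∧ ∀ v ∈ S, ∃! B : Set V, B ∈ P ∧ v ∈ B

/-- `P ∈ Ptn⊇(comps(T−u))`: `P` is a partition of `V ∖ {u}` each of whose blocks is a
union of vertex sets of connected components of `T − u`. -/
def PtnSup (T : SimpleGraph V) (u : V) (P : Set (Set V)) : Prop :=
  IsPartitionOf P {v | v ≠ u} ∧ ∀ B ∈ compPartition T u, ∃ C ∈ P, B ⊆ C

/-- An edge `e` crosses the partition `P` if its two endpoints lie in different blocks of `P`. -/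
def Crosses (P : Set (Set V)) (e : Sym2 V) : Prop :=
  ∃ v w, e = s(v, w) ∧ ∃ B ∈ P, ∃ C ∈ P, B ≠ C ∧ v ∈ B ∧ w ∈ C

/-- `u` is a non-leaf node of `T`. -/
def NonLeaf (T : SimpleGraph V) (u : V) : Prop := 1 < (T.neighborSet u).ncard

/-- The links of the instance: the edges of `G` that are not edges of the tree `T`. -/
def links (G T : SimpleGraph V) : Set (Sym2 V) := G.edgeSet \ T.edgeSet

variable [Fintype V]

/-- Feasibility for the partition LP (P) of the 2NC-TAP instance `(G, T, cost)`. -/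
def FeasibleP (G T : SimpleGraph V) (x : Sym2 V → ℝ) : Prop :=
  (∀ ℓ ∈ links G T, 0 ≤ x ℓ) ∧
  ∀ u : V, NonLeaf T u → ∀ P : Set (Set V), PtnSup T u P →
    (P.ncard : ℝ) - 1 ≤
      ∑ ℓ ∈ Finset.univ.filter (fun ℓ : Sym2 V => ℓ ∈ links G T ∧ Crosses P ℓ), x ℓ


/-- The tree `T` together with a set `F` of links added as edges. -/
def withLinks (T : SimpleGraph V) (F : Set (Sym2 V)) : SimpleGraph V :=
  T ⊔ SimpleGraph.fromEdgeSet F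

/-- The current partition `𝒫^i_u` (0-indexed): the partition of `V ∖ {u}` into the vertex
sets of the connected components of `(T ∪ {ℓ_0, …, ℓ_{i−1}}) − u`. -/
def curPtn {m : ℕ} (T : SimpleGraph V) (ℓseq : Fin m → Sym2 V) (i : ℕ) (u : V) :
    Set (Set V) :=
  compPartition (withLinks T {e | ∃ j : Fin m, (j : ℕ) < i ∧ ℓseq j = e}) u

/-- `inc^i(e)`: the set of non-leaf nodes `u` of `T` whose current partition (at the start
of iteration `i`, 0-indexed) is crossed by the link `e`. -/
def incSet {m : ℕ} (T : SimpleGraph V) (ℓseq : Fin m → Sym2 V) (i : ℕ)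
    (e : Sym2 V) : Set V :=
  {u | NonLeaf T u ∧ Crosses (curPtn T ℓseq i u) e}

/-- A greedy run on the 2NC-TAP instance `(G, T, cost)`: a sequence of distinct links
`ℓ_0, …, ℓ_{m−1}` such that each `ℓ_i` minimizes the cost-coverage ratio at iteration `i`,
and at the end every current partition is trivial (i.e. `T` plus the picked links
is 2-node-connected). -/
def IsGreedyRun (G T : SimpleGraph V) (cost : Sym2 V → ℝ) (m : ℕ)
    (ℓseq : Fin m → Sym2 V) : Prop :=
  Function.Injective ℓseq ∧
  (∀ i, ℓseq i ∈ links G T) ∧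
  (∀ i : Fin m,
    (incSet T ℓseq (i : ℕ) (ℓseq i)).Nonempty ∧
    ∀ e ∈ links G T, (incSet T ℓseq (i : ℕ) e).Nonempty →
      cost (ℓseq i) / ((incSet T ℓseq (i : ℕ) (ℓseq i)).ncard : ℝ)
        ≤ cost e / ((incSet T ℓseq (i : ℕ) e).ncard : ℝ)) ∧
  ∀ u : V, NonLeaf T u → curPtn T ℓseq m u = {{v | v ≠ u}}

/-- `ν(u)`: the number of connected components of `T − u`. -/
noncomputable def nblocks (T : SimpleGraph V) (u : V) : ℕ := (compPartition T u).ncard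


lemma noWalkAux {H : SimpleGraph V} {u : V} :
    ∀ {a : V}, (delVert H u).Walk a u → a ≠ u → False
  | _, .nil, ha => ha rfl
  | _, .cons h p, _ => noWalkAux p h.2.2

lemma reach_ne {H : SimpleGraph V} {u a x : V}
    (h : (delVert H u).Reachable a x) (ha : a ≠ u) : x ≠ u := by
  rintro rfl
  obtain ⟨p⟩ := h
  exact noWalkAux p ha

lemma crosses_comp_iff (H : SimpleGraph V) (u : V) (e : Sym2 V) :
    Crosses (compPartition H u) e ↔
      ∃ v w, e = s(v, w) ∧ v ≠ u ∧ w ≠ u ∧ ¬ (delVert H u).Reachable v w := by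
  constructor
  · rintro ⟨v, w, he, B, ⟨a, ha, rfl⟩, C, ⟨b, hb, rfl⟩, hBC, hv, hw⟩
    refine ⟨v, w, he, reach_ne hv ha, reach_ne hw hb, fun hr => hBC ?_⟩
    have hab : (delVert H u).Reachable a b := hv.trans (hr.trans hw.symm)
    ext x
    exact ⟨fun hx => hab.symm.trans hx, fun hx => hab.trans hx⟩
  · rintro ⟨v, w, he, hv, hw, hr⟩
    refine ⟨v, w, he, {x | (delVert H u).Reachable v x}, ⟨v, hv, rfl⟩,
      {x | (delVert H u).Reachable w x}, ⟨w, hw, rfl⟩, ?_, SimpleGraph.Reachable.refl v,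
      SimpleGraph.Reachable.refl w⟩
    intro hEq
    have : v ∈ {x | (delVert H u).Reachable w x} := hEq ▸ SimpleGraph.Reachable.refl v
    exact hr this.symm

lemma delVert_mono {H H' : SimpleGraph V} (h : H ≤ H') (u : V) :
    delVert H u ≤ delVert H' u := by
  rintro a b ⟨hab, ha, hb⟩; exact ⟨h hab, ha, hb⟩

lemma crosses_comp_mono {H H' : SimpleGraph V} (h : H ≤ H') (u : V) {e : Sym2 V}
    (hc : Crosses (compPartition H' u) e) : Crosses (compPartition H u) e := by
  rw [crosses_comp_iff] at hc ⊢
  obtain ⟨v, w, he, hv, hw, hr⟩ := hc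
  exact ⟨v, w, he, hv, hw, fun hr' => hr (hr'.mono (delVert_mono h u))⟩

lemma incSet_anti {m : ℕ} (T : SimpleGraph V) (ℓseq : Fin m → Sym2 V) {i i' : ℕ}
    (hii : i ≤ i') (e : Sym2 V) : incSet T ℓseq i' e ⊆ incSet T ℓseq i e := by
  intro u hu
  refine ⟨hu.1, ?_⟩
  refine crosses_comp_mono ?_ u hu.2
  refine sup_le_sup_left (SimpleGraph.fromEdgeSet_mono ?_) T
  rintro x ⟨j, hj, rfl⟩
  exact ⟨j, lt_of_lt_of_le hj hii, rfl⟩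

/-- In any greedy run, for each non-leaf node `u` the weights assigned to
`u`'s partitions are nondecreasing along the order of assignment; equivalently, all the
dual values `y(𝒫)` (the consecutive differences of the weights, and `0` on partitions
never assigned a weight) are nonnegative. Here `sig u` enumerates, in increasing order,
the iterations whose picked link crosses `u`'s current partition, and
`w u j = wgt(𝒫̂^{j+1}_u)` is the cost-coverage ratio of the picking iteration. -/
theorem assigned_weights_monotone
    (G T : SimpleGraph V) (hV : 3 ≤ Fintype.card V) (hTG : T ≤ G) (hT : T.IsTree)
    (cost : Sym2 V → ℝ) (hcost : ∀ ℓ ∈ links G T, 0 ≤ cost ℓ)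
    (m : ℕ) (ℓseq : Fin m → Sym2 V) (hrun : IsGreedyRun G T cost m ℓseq)
    (sig : (u : V) → Fin (nblocks T u - 1) → Fin m)
    (hsig : ∀ u : V, NonLeaf T u → StrictMono (sig u) ∧
      ∀ i : Fin m, Crosses (curPtn T ℓseq (i : ℕ) u) (ℓseq i) ↔ ∃ j, sig u j = i)
    (w : (u : V) → Fin (nblocks T u - 1) → ℝ)
    (hw : ∀ (u : V) (j : Fin (nblocks T u - 1)),
      w u j = cost (ℓseq (sig u j)) /
        ((incSet T ℓseq ((sig u j : Fin m) : ℕ) (ℓseq (sig u j))).ncard : ℝ)) :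
    ∀ u : V, NonLeaf T u →
      (∀ j : Fin (nblocks T u - 1), 0 ≤ w u j) ∧
      (∀ j j' : Fin (nblocks T u - 1), j ≤ j' → w u j ≤ w u j') := by
  obtain ⟨hinj, hlinks, hgreedy, hend⟩ := hrun
  intro u hu
  have hnonneg : ∀ j : Fin (nblocks T u - 1), 0 ≤ w u j := by
    intro j
    rw [hw]
    exact div_nonneg (hcost _ (hlinks _)) (by positivity)
  refine ⟨hnonneg, ?_⟩
  intro j j' hjj
  rcases eq_or_lt_of_le hjj with rfl | hlt
  · exact le_refl _
  have hmono := (hsig u hu).1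
  have hii : sig u j < sig u j' := hmono hlt
  set i := sig u j
  set i' := sig u j'
  -- u ∈ incSet at i' for ℓseq i'
  have hcross' : Crosses (curPtn T ℓseq (i' : ℕ) u) (ℓseq i') :=
    ((hsig u hu).2 i').mpr ⟨j', rfl⟩
  have hu_i' : u ∈ incSet T ℓseq (i' : ℕ) (ℓseq i') := ⟨hu, hcross'⟩
  have hu_i : u ∈ incSet T ℓseq (i : ℕ) (ℓseq i') :=
    incSet_anti T ℓseq (le_of_lt hii) _ hu_i'
  have hne_i : (incSet T ℓseq (i : ℕ) (ℓseq i')).Nonempty := ⟨u, hu_i⟩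
  have hne_i' : (incSet T ℓseq (i' : ℕ) (ℓseq i')).Nonempty := ⟨u, hu_i'⟩
  have hgr := (hgreedy i).2 (ℓseq i') (hlinks i') hne_i
  have hpos' : 0 < ((incSet T ℓseq (i' : ℕ) (ℓseq i')).ncard : ℝ) := by
    exact_mod_cast (Set.ncard_pos (Set.toFinite _)).mpr hne_i'
  have hpos : 0 < ((incSet T ℓseq (i : ℕ) (ℓseq i')).ncard : ℝ) := by
    exact_mod_cast (Set.ncard_pos (Set.toFinite _)).mpr hne_i
  have hcard : ((incSet T ℓseq (i' : ℕ) (ℓseq i')).ncard : ℝ)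
      ≤ ((incSet T ℓseq (i : ℕ) (ℓseq i')).ncard : ℝ) := by
    exact_mod_cast Set.ncard_le_ncard (incSet_anti T ℓseq (le_of_lt hii) _)
      (Set.toFinite _)
  have h2 : cost (ℓseq i') / ((incSet T ℓseq (i : ℕ) (ℓseq i')).ncard : ℝ)
      ≤ cost (ℓseq i') / ((incSet T ℓseq (i' : ℕ) (ℓseq i')).ncard : ℝ) :=
    div_le_div_of_nonneg_left (hcost _ (hlinks i')) hpos' hcard
  rw [hw, hw]
  exact le_trans hgr h2

end TwoNCTAP
end

section
/- Consider a greedy run on a 2NC-TAP instance, a link ℓ ∈ L, and let Q be the set of internal nodes of the tree path T(ℓ). For each u ∈ Q let h(u) be the largest index j such that ℓ crosses 𝒫̂^j_u. Then: (a) for each u ∈ Q, Σ_{𝒫 ∈ Ptn⊇(comps(T−u)) crossed by ℓ} y(𝒫) = wgt(𝒫̂^{h(u)}_u); and (b) if u_1, …, u_{|Q|} is the ordering of Q that is the reverse of the order in which the run assigns the weights wgt(𝒫̂^{h(u)}_u), u ∈ Q, then wgt(𝒫̂^{h(u_j)}_{u_j}) ≤ cost(ℓ)/j for each j ∈ {1,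 …, |Q|}. -/
open scoped Classical
open Finset

namespace TwoNCTAP

variable {V : Type*}

variable [Fintype V]

/-- The dual values associated with a nondecreasing sequence `w` of assigned weights:
`yOf w 0 = w 0` and `yOf w j = w j − w (j−1)` for `j ≥ 1`. -/
def yOf {k : ℕ} (w : Fin k → ℝ) (j : Fin k) : ℝ :=
  if (j : ℕ) = 0 then w j
  else w j - w ⟨(j : ℕ) - 1, lt_of_le_of_lt (Nat.sub_le _ _) j.isLt⟩

/-- `u` is an internal node of the tree path `T(e)` between the endpoints of the link `e`:
`u` is distinct from both endpoints and separates them in `T`. -/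
def InternalNode (T : SimpleGraph V) (e : Sym2 V) (u : V) : Prop :=
  ∃ v w : V, e = s(v, w) ∧ u ≠ v ∧ u ≠ w ∧ ¬ (delVert T u).Reachable v w

section Aux

lemma eq_of_reachable_delVert {H : SimpleGraph V} {u x : V}
    (h : (delVert H u).Reachable u x) : u = x := by
  obtain ⟨w⟩ := h
  cases w with
  | nil => rfl
  | cons h p => exact absurd rfl h.2.1

lemma crosses_compPartition_iff {H : SimpleGraph V} {u : V} {e : Sym2 V} :
    Crosses (compPartition H u) e ↔
      ∃ a b : V, e = s(a, b) ∧ a ≠ u ∧ b ≠ u ∧ ¬ (delVert H u).Reachable a b := by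
  constructor
  · rintro ⟨v, w, rfl, B, ⟨vB, hvB, rfl⟩, C, ⟨vC, hvC, rfl⟩, hBC, hv, hw⟩
    refine ⟨v, w, rfl, ?_, ?_, ?_⟩
    · rintro rfl
      exact hvB (eq_of_reachable_delVert (Set.mem_setOf_eq ▸ hv).symm).symm
    · rintro rfl
      exact hvC (eq_of_reachable_delVert (Set.mem_setOf_eq ▸ hw).symm).symm
    · intro hr
      apply hBC
      have hv' : (delVert H u).Reachable vB v := hv
      have hw' : (delVert H u).Reachable vC w := hw
      ext x
      simp only [Set.mem_setOf_eq]
      constructor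
      · intro hx
        exact hw'.trans ((hv'.trans hr).symm.trans hx)
      · intro hx
        exact (hv'.trans hr).trans (hw'.symm.trans hx)
  · rintro ⟨a, b, rfl, ha, hb, hr⟩
    refine ⟨a, b, rfl, {x | (delVert H u).Reachable a x}, ⟨a, ha, rfl⟩,
      {x | (delVert H u).Reachable b x}, ⟨b, hb, rfl⟩, ?_, by exact SimpleGraph.Reachable.refl a,
      by exact SimpleGraph.Reachable.refl b⟩
    intro hEq
    apply hr
    have : b ∈ {x | (delVert H u).Reachable b x} := by exact SimpleGraph.Reachable.refl b
    rw [← hEq] at this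
    exact this

lemma crosses_anti {H H' : SimpleGraph V} (h : H ≤ H') {u : V} {e : Sym2 V}
    (hc : Crosses (compPartition H' u) e) : Crosses (compPartition H u) e := by
  rw [crosses_compPartition_iff] at hc ⊢
  obtain ⟨a, b, rfl, ha, hb, hr⟩ := hc
  exact ⟨a, b, rfl, ha, hb, fun h' => hr (h'.mono (delVert_mono h u))⟩

lemma curPtn_crosses_anti {m : ℕ} (T : SimpleGraph V) (ℓseq : Fin m → Sym2 V)
    {i i' : ℕ} (hii : i ≤ i') {u : V} {e : Sym2 V}
    (hc : Crosses (curPtn T ℓseq i' u) e) : Crosses (curPtn T ℓseq i u) e := by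
  refine crosses_anti ?_ hc
  apply sup_le_sup_left
  apply SimpleGraph.fromEdgeSet_mono
  rintro e' ⟨j, hj, rfl⟩
  exact ⟨j, lt_of_lt_of_le hj hii, rfl⟩

lemma snd_mem_support_tail {G : SimpleGraph V} {x y : V} (p : G.Walk x y) (hp : ¬p.Nil) :
    p.getVert 1 ∈ p.support.tail := by
  rw [← SimpleGraph.Walk.support_tail_of_not_nil p hp]
  exact p.tail.start_mem_support

lemma internalNode_nonLeaf [Fintype V] {T : SimpleGraph V} (hT : T.Connected)
    {e : Sym2 V} {u : V} (h : InternalNode T e u) : NonLeaf T u := by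
  classical
  obtain ⟨v, w, -, huv, huw, hur⟩ := h
  by_contra hnl
  apply hur
  obtain ⟨p0⟩ := hT.preconnected v w
  set p : T.Walk v w := (p0.toPath : T.Walk v w) with hpdef
  have hp : p.IsPath := p0.toPath.2
  have hunotin : u ∉ p.support := by
    intro hu
    apply hnl
    set q := p.takeUntil u hu with hqdef
    set r := p.dropUntil u hu with hrdef
    have hps : q.support ++ r.support.tail = p.support := by
      rw [← SimpleGraph.Walk.support_append, SimpleGraph.Walk.take_spec]
    have hnodup : (q.support ++ r.support.tail).Nodup := by
      rw [hps]; exact hp.support_nodup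
    have hdisj : q.support.Disjoint r.support.tail :=
      fun x hx hx' => (List.nodup_append.1 hnodup).2.2 x hx x hx' rfl
    have hqn : ¬ q.reverse.Nil := SimpleGraph.Walk.not_nil_of_ne huv
    have hrn : ¬ r.Nil := SimpleGraph.Walk.not_nil_of_ne huw
    set a := q.reverse.getVert 1 with hadef
    set b := r.getVert 1 with hbdef
    have hadja : T.Adj u a := q.reverse.adj_snd hqn
    have hadjb : T.Adj u b := r.adj_snd hrn
    have hamem : a ∈ q.support := by
      have := snd_mem_support_tail q.reverse hqn
      have h2 : a ∈ q.reverse.support := List.mem_of_mem_tail this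
      rwa [SimpleGraph.Walk.support_reverse, List.mem_reverse] at h2
    have hbmem : b ∈ r.support.tail := snd_mem_support_tail r hrn
    have hab : a ≠ b := fun hEq => hdisj hamem (hEq ▸ hbmem)
    rw [NonLeaf]
    rw [Set.one_lt_ncard_iff (Set.toFinite _)]
    exact ⟨a, b, hadja, hadjb, hab⟩
  refine ⟨p.transfer (delVert T u) ?_⟩
  intro e' he'
  induction e' with
  | h a b =>
    have hadj : T.Adj a b := p.edges_subset_edgeSet he'
    have ha : a ∈ p.support := p.fst_mem_support_of_mem_edges he'
    have hb : b ∈ p.support := p.snd_mem_support_of_mem_edges he'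
    exact ⟨hadj, fun h => hunotin (h ▸ ha), fun h => hunotin (h ▸ hb)⟩

lemma sum_Iic_yOf {k : ℕ} (w : Fin k → ℝ) (j : Fin k) :
    ∑ i ∈ Finset.Iic j, yOf w i = w j := by
  obtain ⟨n, hn⟩ : ∃ n, (j : ℕ) = n := ⟨_, rfl⟩
  induction n generalizing j with
  | zero =>
    have hIic : Finset.Iic j = {j} := by
      ext i
      simp only [Finset.mem_Iic, Finset.mem_singleton, Fin.le_def, Fin.ext_iff]
      omega
    rw [hIic, Finset.sum_singleton, yOf, if_pos hn]
  | succ n ih =>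
    have hkn : n < k := by omega
    set j' : Fin k := ⟨n, hkn⟩ with hj'def
    have hins : Finset.Iic j = insert j (Finset.Iic j') := by
      ext i
      simp only [Finset.mem_Iic, Finset.mem_insert, Fin.le_def, Fin.ext_iff, hj'def]
      omega
    have hnot : j ∉ Finset.Iic j' := by
      simp only [Finset.mem_Iic, Fin.le_def, hj'def]
      omega
    rw [hins, Finset.sum_insert hnot, ih j' rfl]
    rw [yOf, if_neg (by omega : ¬((j : ℕ) = 0))]
    have hfin : (⟨(j : ℕ) - 1, lt_of_le_of_lt (Nat.sub_le _ _) j.isLt⟩ : Fin k) = j' := by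
      rw [Fin.ext_iff]
      simp only [hj'def]
      omega
    rw [hfin]
    ring

end Aux

/-- Fix a greedy run and a link `ℓ`, and let `Q` be the set of internal
nodes of `T(ℓ)`. For `u ∈ Q` let `h(u)` be the largest index `j` such that `ℓ` crosses
`𝒫̂^j_u`, let `time u` be the iteration in which `wgt(𝒫̂^{h(u)}_u)` is assigned and
`wfin u = wgt(𝒫̂^{h(u)}_u)`. Then: (a) for each `u ∈ Q`, the sum of the dual values
`y(𝒫)` over the partitions `𝒫` of `u` crossed by `ℓ` equals `wgt(𝒫̂^{h(u)}_u)`; and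
(b) for any enumeration `u_1, …, u_{|Q|}` of `Q` that is the reverse of the order in which
the run assigns the weights `wgt(𝒫̂^{h(u)}_u)`, we have
`wgt(𝒫̂^{h(u_j)}_{u_j}) ≤ cost(ℓ)/j`. -/
theorem dual_values_of_link
    (G T : SimpleGraph V) (hV : 3 ≤ Fintype.card V) (hTG : T ≤ G) (hT : T.IsTree)
    (cost : Sym2 V → ℝ) (hcost : ∀ e ∈ links G T, 0 ≤ cost e)
    (m : ℕ) (ℓseq : Fin m → Sym2 V) (hrun : IsGreedyRun G T cost m ℓseq)
    (sig : (u : V) → Fin (nblocks T u - 1) → Fin m)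
    (hsig : ∀ u : V, NonLeaf T u → StrictMono (sig u) ∧
      ∀ i : Fin m, Crosses (curPtn T ℓseq (i : ℕ) u) (ℓseq i) ↔ ∃ j, sig u j = i)
    (w : (u : V) → Fin (nblocks T u - 1) → ℝ)
    (hw : ∀ (u : V) (j : Fin (nblocks T u - 1)),
      w u j = cost (ℓseq (sig u j)) /
        ((incSet T ℓseq ((sig u j : Fin m) : ℕ) (ℓseq (sig u j))).ncard : ℝ))
    (ℓ : Sym2 V) (hℓ : ℓ ∈ links G T)
    (time : V → ℕ) (wfin : V → ℝ)
    (htw : ∀ u : V, InternalNode T ℓ u → ∃ j : Fin (nblocks T u - 1),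
      Crosses (curPtn T ℓseq ((sig u j : Fin m) : ℕ) u) ℓ ∧
      (∀ j' : Fin (nblocks T u - 1),
        Crosses (curPtn T ℓseq ((sig u j' : Fin m) : ℕ) u) ℓ → j' ≤ j) ∧
      time u = ((sig u j : Fin m) : ℕ) ∧ wfin u = w u j) :
    (∀ u : V, InternalNode T ℓ u →
      ∑ j ∈ Finset.univ.filter
          (fun j : Fin (nblocks T u - 1) =>
            Crosses (curPtn T ℓseq ((sig u j : Fin m) : ℕ) u) ℓ),
        yOf (w u) j = wfin u) ∧
    (∀ (q : ℕ) (ord : Fin q → V),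
      (∀ j : Fin q, InternalNode T ℓ (ord j)) →
      (∀ u : V, InternalNode T ℓ u → ∃ j : Fin q, ord j = u) →
      Function.Injective ord →
      (∀ j j' : Fin q, j ≤ j' → time (ord j') ≤ time (ord j)) →
      ∀ j : Fin q, wfin (ord j) ≤ cost ℓ / ((j : ℕ) + 1)) := by
  classical
  obtain ⟨hinj, hlinks, hgreedy, hfinal⟩ := hrun
  have hconn : T.Connected := hT.isConnected
  have key_nl : ∀ u : V, InternalNode T ℓ u → NonLeaf T u :=
    fun u hu => internalNode_nonLeaf hconn hu
  constructor
  · intro u hu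
    obtain ⟨j₀, hcross, hmax, htime, hwfin⟩ := htw u hu
    have hnl := key_nl u hu
    have hmono := (hsig u hnl).1.monotone
    have hfilter : Finset.univ.filter (fun j : Fin (nblocks T u - 1) =>
        Crosses (curPtn T ℓseq ((sig u j : Fin m) : ℕ) u) ℓ) = Finset.Iic j₀ := by
      ext i
      simp only [Finset.mem_filter, Finset.mem_univ, true_and, Finset.mem_Iic]
      constructor
      · exact hmax i
      · intro hle
        exact curPtn_crosses_anti T ℓseq (hmono hle) hcross
    rw [hfilter, sum_Iic_yOf]
    exact hwfin.symm
  · intro q ord hintl hsurj hinjord htimemono j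
    obtain ⟨j₀, hcross, hmax, htime, hwfin⟩ := htw (ord j) (hintl j)
    have hsubset : (fun j' : Fin q => ord j') '' {j' | j' ≤ j} ⊆
        incSet T ℓseq ((sig (ord j) j₀ : Fin m) : ℕ) ℓ := by
      rintro _ ⟨j', hj', rfl⟩
      refine ⟨key_nl _ (hintl j'), ?_⟩
      obtain ⟨j₁, hcross', -, htime', -⟩ := htw (ord j') (hintl j')
      have hle : ((sig (ord j) j₀ : Fin m) : ℕ) ≤ ((sig (ord j') j₁ : Fin m) : ℕ) := by
        rw [← htime', ← htime]
        exact htimemono j' j hj'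
      exact curPtn_crosses_anti T ℓseq hle hcross'
    have hcard : (j : ℕ) + 1 ≤ (incSet T ℓseq ((sig (ord j) j₀ : Fin m) : ℕ) ℓ).ncard := by
      have h1 : ((fun j' : Fin q => ord j') '' {j' | j' ≤ j}).ncard = (j : ℕ) + 1 := by
        rw [Set.ncard_image_of_injective _ hinjord]
        have hset : {j' : Fin q | j' ≤ j} = ↑(Finset.Iic j) := by ext; simp
        rw [hset, Set.ncard_coe_finset, Fin.card_Iic]
      calc (j : ℕ) + 1 = _ := h1.symm
        _ ≤ _ := Set.ncard_le_ncard hsubset (Set.toFinite _)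
    have hne : (incSet T ℓseq ((sig (ord j) j₀ : Fin m) : ℕ) ℓ).Nonempty :=
      ⟨ord j, key_nl _ (hintl j), hcross⟩
    have hgr := (hgreedy (sig (ord j) j₀)).2 ℓ hℓ hne
    rw [hwfin, hw]
    refine le_trans hgr ?_
    have hc : ((j : ℕ) : ℝ) + 1 ≤
        ((incSet T ℓseq ((sig (ord j) j₀ : Fin m) : ℕ) ℓ).ncard : ℝ) := by
      exact_mod_cast hcard
    have hpos : (0 : ℝ) < ((j : ℕ) : ℝ) + 1 := by positivity
    exact div_le_div_of_nonneg_left (hcost ℓ hℓ) hpos hc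

end TwoNCTAP
end

section
/- In any greedy run on a 2NC-TAP instance, the dual objective value of y equals the total cost of the picked links: for each non-leaf node u of T, Σ_{𝒫 ∈ Ptn⊇(comps(T−u))} (|𝒫| − 1)·y(𝒫) = Σ_{j=1}^{ν(u)−1} wgt(𝒫̂^j_u), and summing over all non-leaf nodes, Σ_{u non-leaf} Σ_{𝒫 ∈ Ptn⊇(comps(T−u))} (|𝒫| − 1)·y(𝒫) = Σ_{i=1}^{m} cost(ℓ_i). -/
open scoped Classical
open Finset

namespace TwoNCTAP

variable {V : Type*}

variable [Fintype V]

section AuxLemmas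

lemma reach_class_eq {G : SimpleGraph V} {v w : V} (h : G.Reachable v w) :
    {x | G.Reachable v x} = {x | G.Reachable w x} := by
  ext x; exact ⟨fun hx => h.symm.trans hx, fun hx => h.trans hx⟩

lemma reach_sup_single {G : SimpleGraph V} {a b : V} {x y : V} :
    (G ⊔ SimpleGraph.fromEdgeSet {s(a,b)}).Reachable x y →
      G.Reachable x y ∨ (G.Reachable x a ∧ G.Reachable b y) ∨ (G.Reachable x b ∧ G.Reachable a y) := by
  intro ⟨p⟩
  induction p with
  | nil => exact Or.inl (SimpleGraph.Reachable.refl _)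
  | @cons x z y h p ih =>
    simp only [SimpleGraph.sup_adj, SimpleGraph.fromEdgeSet_adj, Set.mem_singleton_iff,
      Sym2.eq_iff] at h
    rcases h with h | ⟨(⟨hxa, hzb⟩ | ⟨hxb, hza⟩), hne⟩
    · rcases ih with h1 | ⟨h1, h2⟩ | ⟨h1, h2⟩
      · exact Or.inl (h.reachable.trans h1)
      · exact Or.inr (Or.inl ⟨h.reachable.trans h1, h2⟩)
      · exact Or.inr (Or.inr ⟨h.reachable.trans h1, h2⟩)
    · subst hxa; subst hzb
      rcases ih with h1 | ⟨h1, h2⟩ | ⟨h1, h2⟩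
      · exact Or.inr (Or.inl ⟨SimpleGraph.Reachable.refl _, h1⟩)
      · exact Or.inr (Or.inl ⟨SimpleGraph.Reachable.refl _, h2⟩)
      · exact Or.inl h2
    · subst hxb; subst hza
      rcases ih with h1 | ⟨h1, h2⟩ | ⟨h1, h2⟩
      · exact Or.inr (Or.inr ⟨SimpleGraph.Reachable.refl _, h1⟩)
      · exact Or.inl h2
      · exact Or.inr (Or.inr ⟨SimpleGraph.Reachable.refl _, h2⟩)

lemma reach_sup_single_iff {G : SimpleGraph V} {a b : V} (hab : a ≠ b) (x y : V) :
    (G ⊔ SimpleGraph.fromEdgeSet {s(a,b)}).Reachable x y ↔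
      G.Reachable x y ∨ (G.Reachable x a ∧ G.Reachable b y) ∨ (G.Reachable x b ∧ G.Reachable a y) := by
  constructor
  · exact reach_sup_single
  · have hadj : (G ⊔ SimpleGraph.fromEdgeSet {s(a,b)}).Adj a b := by
      simp [SimpleGraph.sup_adj, SimpleGraph.fromEdgeSet_adj, hab]
    rintro (h | ⟨h1, h2⟩ | ⟨h1, h2⟩)
    · exact h.mono le_sup_left
    · exact ((h1.mono le_sup_left).trans hadj.reachable).trans (h2.mono le_sup_left)
    · exact ((h1.mono le_sup_left).trans hadj.symm.reachable).trans (h2.mono le_sup_left)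

lemma delVert_reachable_ne {H : SimpleGraph V} {u v w : V} (hv : v ≠ u)
    (h : (delVert H u).Reachable v w) : w ≠ u := by
  rintro rfl
  obtain ⟨p⟩ := h.symm
  cases p with
  | nil => exact hv rfl
  | cons h p => exact h.2.1 rfl

lemma delVert_sup (H K : SimpleGraph V) (u : V) :
    delVert (H ⊔ K) u = delVert H u ⊔ delVert K u := by
  ext a b
  show (H.Adj a b ∨ K.Adj a b) ∧ a ≠ u ∧ b ≠ u ↔ _
  constructor
  · rintro ⟨h | h, ha, hb⟩
    · exact Or.inl ⟨h, ha, hb⟩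
    · exact Or.inr ⟨h, ha, hb⟩
  · rintro (⟨h, ha, hb⟩ | ⟨h, ha, hb⟩)
    · exact ⟨Or.inl h, ha, hb⟩
    · exact ⟨Or.inr h, ha, hb⟩

lemma delVert_single {a b u : V} (ha : a ≠ u) (hb : b ≠ u) :
    delVert (SimpleGraph.fromEdgeSet {s(a,b)}) u = SimpleGraph.fromEdgeSet {s(a,b)} := by
  ext x y
  show ((SimpleGraph.fromEdgeSet {s(a,b)}).Adj x y) ∧ x ≠ u ∧ y ≠ u ↔ _
  constructor
  · exact fun h => h.1
  · intro h
    refine ⟨h, ?_, ?_⟩ <;>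
    · rcases (SimpleGraph.fromEdgeSet_adj _).mp h with ⟨he, -⟩
      rw [Set.mem_singleton_iff, Sym2.eq_iff] at he
      rcases he with ⟨rfl, rfl⟩ | ⟨rfl, rfl⟩ <;> assumption

lemma delVert_single_mem {a b u : V} (h : a = u ∨ b = u) (H : SimpleGraph V) :
    delVert (H ⊔ SimpleGraph.fromEdgeSet {s(a,b)}) u = delVert H u := by
  ext x y
  show ((H.Adj x y ∨ (SimpleGraph.fromEdgeSet {s(a,b)}).Adj x y) ∧ x ≠ u ∧ y ≠ u) ↔
    (H.Adj x y ∧ x ≠ u ∧ y ≠ u)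
  constructor
  · rintro ⟨hx | hx, hxu, hyu⟩
    · exact ⟨hx, hxu, hyu⟩
    · exfalso
      rcases (SimpleGraph.fromEdgeSet_adj _).mp hx with ⟨he, -⟩
      rw [Set.mem_singleton_iff, Sym2.eq_iff] at he
      rcases he with ⟨rfl, rfl⟩ | ⟨rfl, rfl⟩ <;> rcases h with rfl | rfl <;> simp_all
  · rintro ⟨hx, hxu, hyu⟩; exact ⟨Or.inl hx, hxu, hyu⟩

lemma mem_compPartition_self {H : SimpleGraph V} {u v : V} (hv : v ≠ u) :
    {w | (delVert H u).Reachable v w} ∈ compPartition H u := ⟨v, hv, rfl⟩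

lemma block_eq_class {H : SimpleGraph V} {u : V} {S : Set V}
    (hS : S ∈ compPartition H u) {x : V} (hx : x ∈ S) :
    x ≠ u ∧ S = {w | (delVert H u).Reachable x w} := by
  obtain ⟨v, hv, rfl⟩ := hS
  have hrx : (delVert H u).Reachable v x := hx
  exact ⟨delVert_reachable_ne hv hrx, reach_class_eq hrx⟩

lemma compPartition_sup_not_crosses {H : SimpleGraph V} {u a b : V} (hab : a ≠ b)
    (h : ¬ Crosses (compPartition H u) s(a,b)) :
    compPartition (H ⊔ SimpleGraph.fromEdgeSet {s(a,b)}) u = compPartition H u := by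
  by_cases hu : a = u ∨ b = u
  · unfold compPartition
    rw [delVert_single_mem hu]
  · push_neg at hu
    obtain ⟨hau, hbu⟩ := hu
    have hRab : (delVert H u).Reachable a b := by
      by_contra hR
      refine h ⟨a, b, rfl, _, mem_compPartition_self hau, _, mem_compPartition_self hbu,
        ?_, SimpleGraph.Reachable.refl _, SimpleGraph.Reachable.refl _⟩
      intro he
      exact hR (Set.ext_iff.mp he b |>.mpr (SimpleGraph.Reachable.refl _))
    have hdel : delVert (H ⊔ SimpleGraph.fromEdgeSet {s(a,b)}) u
        = delVert H u ⊔ SimpleGraph.fromEdgeSet {s(a,b)} := by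
      rw [delVert_sup, delVert_single hau hbu]
    have hre : ∀ x y : V, (delVert (H ⊔ SimpleGraph.fromEdgeSet {s(a,b)}) u).Reachable x y ↔
        (delVert H u).Reachable x y := by
      intro x y
      rw [hdel, reach_sup_single_iff hab]
      constructor
      · rintro (h1 | ⟨h1, h2⟩ | ⟨h1, h2⟩)
        · exact h1
        · exact (h1.trans hRab).trans h2
        · exact (h1.trans hRab.symm).trans h2
      · exact Or.inl
    unfold compPartition
    ext S
    simp only [Set.mem_setOf_eq]
    constructor <;> rintro ⟨v, hv, rfl⟩ <;> exact ⟨v, hv, by ext w; simp [hre]⟩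

lemma compPartition_sup_crosses [Fintype V] {H : SimpleGraph V} {u a b : V}
    (h : Crosses (compPartition H u) s(a,b)) :
    (compPartition (H ⊔ SimpleGraph.fromEdgeSet {s(a,b)}) u).ncard + 1
      = (compPartition H u).ncard := by
  classical
  obtain ⟨v, w, hvw_eq, B, hB, C, hC, hBC, hvB, hwC⟩ := h
  obtain ⟨hvu, hBv⟩ := block_eq_class hB hvB
  obtain ⟨hwu, hCw⟩ := block_eq_class hC hwC
  set R := (delVert H u).Reachable with hR
  have hnR : ¬ R v w := fun hr => hBC (by rw [hBv, hCw]; exact reach_class_eq hr)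
  have hvw : v ≠ w := fun he => hnR (he ▸ SimpleGraph.Reachable.refl _)
  have hdel : delVert (H ⊔ SimpleGraph.fromEdgeSet {s(a,b)}) u
      = delVert H u ⊔ SimpleGraph.fromEdgeSet {s(v,w)} := by
    rw [hvw_eq, delVert_sup, delVert_single hvu hwu]
  set R' := (delVert (H ⊔ SimpleGraph.fromEdgeSet {s(a,b)}) u).Reachable with hR'
  have hre : ∀ x y : V, R' x y ↔ R x y ∨ (R x v ∧ R w y) ∨ (R x w ∧ R v y) := by
    intro x y
    rw [hR', hdel]
    exact reach_sup_single_iff hvw x y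
  have hcls : ∀ x : V, ¬ R v x → ¬ R w x → {y | R' x y} = {y | R x y} := by
    intro x h1 h2
    ext y
    simp only [Set.mem_setOf_eq, hre]
    constructor
    · rintro (h3 | ⟨h3, h4⟩ | ⟨h3, h4⟩)
      · exact h3
      · exact absurd h3.symm h1
      · exact absurd h3.symm h2
    · exact Or.inl
  have hclsv : {y | R' v y} = B ∪ C := by
    ext y
    simp only [Set.mem_setOf_eq, hre, hBv, hCw, Set.mem_union]
    constructor
    · rintro (h3 | ⟨h3, h4⟩ | ⟨h3, h4⟩)
      · exact Or.inl h3
      · exact Or.inr h4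
      · exact absurd h3 hnR
    · rintro (h3 | h3)
      · exact Or.inl h3
      · exact Or.inr (Or.inl ⟨SimpleGraph.Reachable.refl _, h3⟩)
  have hclsw : {y | R' w y} = B ∪ C := by
    ext y
    simp only [Set.mem_setOf_eq, hre, hBv, hCw, Set.mem_union]
    constructor
    · rintro (h3 | ⟨h3, h4⟩ | ⟨h3, h4⟩)
      · exact Or.inr h3
      · exact absurd h3.symm hnR
      · exact Or.inl h4
    · rintro (h3 | h3)
      · exact Or.inr (Or.inr ⟨SimpleGraph.Reachable.refl _, h3⟩)
      · exact Or.inl h3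
  have hPeq : compPartition (H ⊔ SimpleGraph.fromEdgeSet {s(a,b)}) u
      = insert (B ∪ C) (compPartition H u \ {B, C}) := by
    ext S
    constructor
    · rintro ⟨x, hxu, rfl⟩
      by_cases h1 : R v x
      · left
        rw [← hclsv]
        exact (reach_class_eq ((hre v x).mpr (Or.inl h1))).symm
      by_cases h2 : R w x
      · left
        rw [← hclsw]
        exact (reach_class_eq ((hre w x).mpr (Or.inl h2))).symm
      · right
        rw [hcls x h1 h2]
        refine ⟨⟨x, hxu, rfl⟩, ?_⟩
        simp only [Set.mem_insert_iff, Set.mem_singleton_iff]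
        rintro (h3 | h3)
        · apply h1
          have hx : x ∈ B := by rw [← h3]; exact SimpleGraph.Reachable.refl x
          rw [hBv] at hx; exact hx
        · apply h2
          have hx : x ∈ C := by rw [← h3]; exact SimpleGraph.Reachable.refl x
          rw [hCw] at hx; exact hx
    · rintro (rfl | ⟨⟨x, hxu, rfl⟩, hS⟩)
      · exact ⟨v, hvu, hclsv.symm⟩
      · simp only [Set.mem_insert_iff, Set.mem_singleton_iff] at hS
        push_neg at hS
        have h1 : ¬ R v x := fun hr => hS.1 (by rw [hBv]; exact (reach_class_eq hr).symm)
        have h2 : ¬ R w x := fun hr => hS.2 (by rw [hCw]; exact (reach_class_eq hr).symm)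
        exact ⟨x, hxu, (hcls x h1 h2).symm⟩
  have hBCnot : B ∪ C ∉ compPartition H u \ ({B, C} : Set (Set V)) := by
    rintro ⟨hmem, -⟩
    obtain ⟨hvu', hcl⟩ := block_eq_class hmem (Or.inl hvB)
    have hwm : w ∈ B ∪ C := Or.inr hwC
    rw [hcl] at hwm
    exact hnR hwm
  have hfin : (compPartition H u).Finite := Set.toFinite _
  have hsub : ({B, C} : Set (Set V)) ⊆ compPartition H u := by
    rintro S (rfl | rfl)
    · exact hB
    · exact hC
  have hcard2 : 2 ≤ (compPartition H u).ncard := by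
    have : 1 < (compPartition H u).ncard :=
      (Set.one_lt_ncard hfin).mpr ⟨B, hB, C, hC, hBC⟩
    omega
  rw [hPeq, Set.ncard_insert_of_notMem hBCnot hfin.diff,
    Set.ncard_diff hsub (Set.toFinite _), Set.ncard_pair hBC]
  omega

lemma exists_rep_ne {G : SimpleGraph V} {e : Sym2 V} (he : e ∈ G.edgeSet) :
    ∃ a b : V, a ≠ b ∧ e = s(a,b) := by
  induction e with
  | _ a b => exact ⟨a, b, ((SimpleGraph.mem_edgeSet _).mp he).ne, rfl⟩

lemma curPtn_zero {m : ℕ} (T : SimpleGraph V) (ℓseq : Fin m → Sym2 V) (u : V) :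
    curPtn T ℓseq 0 u = compPartition T u := by
  have h1 : {e | ∃ j : Fin m, (j : ℕ) < 0 ∧ ℓseq j = e} = (∅ : Set (Sym2 V)) := by
    ext e; simp
  unfold curPtn withLinks
  rw [h1, SimpleGraph.fromEdgeSet_empty, sup_bot_eq]

lemma curPtn_succ {m : ℕ} (T : SimpleGraph V) (ℓseq : Fin m → Sym2 V) {i : ℕ}
    (him : i < m) (u : V) :
    curPtn T ℓseq (i+1) u =
      compPartition (withLinks T {e | ∃ j : Fin m, (j : ℕ) < i ∧ ℓseq j = e}
        ⊔ SimpleGraph.fromEdgeSet {ℓseq ⟨i, him⟩}) u := by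
  unfold curPtn withLinks
  have hset : {e | ∃ j : Fin m, (j : ℕ) < i + 1 ∧ ℓseq j = e}
      = {e | ∃ j : Fin m, (j : ℕ) < i ∧ ℓseq j = e} ∪ {ℓseq ⟨i, him⟩} := by
    ext e
    simp only [Set.mem_setOf_eq, Set.mem_union, Set.mem_singleton_iff]
    constructor
    · rintro ⟨j, hj, rfl⟩
      rcases Nat.lt_succ_iff_lt_or_eq.mp hj with h | h
      · exact Or.inl ⟨j, h, rfl⟩
      · right; congr 1; exact Fin.ext h
    · rintro (⟨j, hj, rfl⟩ | rfl)
      · exact ⟨j, Nat.lt_succ_of_lt hj, rfl⟩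
      · exact ⟨⟨i, him⟩, Nat.lt_succ_self i, rfl⟩
  rw [hset, SimpleGraph.fromEdgeSet_union, ← sup_assoc]

lemma master_count {m : ℕ} (G T : SimpleGraph V) (ℓseq : Fin m → Sym2 V)
    (hlinks : ∀ i, ℓseq i ∈ links G T) (u : V)
    {k : ℕ} (σ : Fin k → Fin m) (hmono : StrictMono σ)
    (hiff : ∀ i : Fin m, Crosses (curPtn T ℓseq (i : ℕ) u) (ℓseq i) ↔ ∃ j, σ j = i) :
    ∀ i : ℕ, i ≤ m →
      (curPtn T ℓseq i u).ncard
        + (Finset.univ.filter (fun j : Fin k => ((σ j : Fin m) : ℕ) < i)).card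
      = (compPartition T u).ncard := by
  intro i
  induction i with
  | zero =>
    intro _
    rw [curPtn_zero]
    simp
  | succ i ih =>
    intro hi1
    have him : i < m := hi1
    have hprev := ih (Nat.le_of_lt him)
    set iF : Fin m := ⟨i, him⟩ with hiF
    obtain ⟨a, b, hab, habe⟩ := exists_rep_ne (hlinks iF).1
    have hrfl : curPtn T ℓseq i u
        = compPartition (withLinks T {e | ∃ j : Fin m, (j : ℕ) < i ∧ ℓseq j = e}) u := rfl
    have hstep : curPtn T ℓseq (i+1) u
        = compPartition (withLinks T {e | ∃ j : Fin m, (j : ℕ) < i ∧ ℓseq j = e}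
            ⊔ SimpleGraph.fromEdgeSet {s(a,b)}) u := by
      rw [curPtn_succ T ℓseq him u, habe]
    rw [hrfl] at hprev
    by_cases hc : Crosses (curPtn T ℓseq i u) (ℓseq iF)
    · obtain ⟨j0, hj0⟩ := (hiff iF).mp hc
      have hc' : Crosses (compPartition
          (withLinks T {e | ∃ j : Fin m, (j : ℕ) < i ∧ ℓseq j = e}) u) s(a,b) := by
        rw [← habe]
        exact hc
      have hcard := compPartition_sup_crosses hc'
      have hfilter : Finset.univ.filter (fun j : Fin k => ((σ j : Fin m) : ℕ) < i + 1)
          = insert j0 (Finset.univ.filter (fun j : Fin k => ((σ j : Fin m) : ℕ) < i)) := by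
        ext j
        simp only [Finset.mem_filter, Finset.mem_insert, Finset.mem_univ, true_and]
        constructor
        · intro hj
          rcases Nat.lt_succ_iff_lt_or_eq.mp hj with h | h
          · exact Or.inr h
          · exact Or.inl (hmono.injective (by rw [hj0]; exact Fin.ext h))
        · rintro (rfl | hj)
          · rw [hj0]
            exact Nat.lt_succ_self i
          · exact Nat.lt_succ_of_lt hj
      have hj0not : j0 ∉ Finset.univ.filter (fun j : Fin k => ((σ j : Fin m) : ℕ) < i) := by
        simp [hj0, hiF]
      rw [hstep, hfilter, Finset.card_insert_of_notMem hj0not]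
      omega
    · have hc' : ¬ Crosses (compPartition
          (withLinks T {e | ∃ j : Fin m, (j : ℕ) < i ∧ ℓseq j = e}) u) s(a,b) := by
        intro hx
        apply hc
        rw [habe]
        exact hx
      have heq := compPartition_sup_not_crosses hab hc'
      have hfilter : Finset.univ.filter (fun j : Fin k => ((σ j : Fin m) : ℕ) < i + 1)
          = Finset.univ.filter (fun j : Fin k => ((σ j : Fin m) : ℕ) < i) := by
        ext j
        simp only [Finset.mem_filter, Finset.mem_univ, true_and]
        constructor
        · intro hj
          rcases Nat.lt_succ_iff_lt_or_eq.mp hj with h | h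
          · exact h
          · exact absurd ((hiff iF).mpr ⟨j, Fin.ext h⟩) hc
        · exact fun hj => Nat.lt_succ_of_lt hj
      rw [hstep, heq, hfilter]
      exact hprev

lemma yOf_castSucc {k : ℕ} (w : Fin (k+1) → ℝ) (j : Fin k) :
    yOf (w ∘ Fin.castSucc) j = yOf w j.castSucc := by
  unfold yOf
  rcases Nat.eq_zero_or_pos (j : ℕ) with h | h
  · simp [Fin.coe_castSucc, h]
  · have h1 : ((j : ℕ) ≠ 0) := Nat.pos_iff_ne_zero.mp h
    simp only [Fin.coe_castSucc, if_neg h1, Function.comp_apply]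
    congr 1

lemma sum_yOf {k : ℕ} (w : Fin (k+1) → ℝ) :
    ∑ j, yOf w j = w (Fin.last k) := by
  induction k with
  | zero => simp [yOf]
  | succ k ih =>
    rw [Fin.sum_univ_castSucc]
    have h0 : ∀ j : Fin (k+1), yOf w j.castSucc = yOf (w ∘ Fin.castSucc) j :=
      fun j => (yOf_castSucc w j).symm
    rw [Finset.sum_congr rfl (fun j _ => h0 j), ih]
    have hlast : yOf w (Fin.last (k+1)) = w (Fin.last (k+1)) - w ⟨k, by omega⟩ := by
      unfold yOf
      rw [if_neg (by simp [Fin.last])]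
      rfl
    rw [hlast]
    have h2 : (w ∘ Fin.castSucc) (Fin.last k) = w ⟨k, by omega⟩ := rfl
    rw [h2]; ring

lemma sum_coeff_yOf {k : ℕ} (w : Fin k → ℝ) :
    ∑ j : Fin k, ((k : ℝ) - (j : ℕ)) * yOf w j = ∑ j : Fin k, w j := by
  induction k with
  | zero => simp
  | succ k ih =>
    rw [Fin.sum_univ_castSucc, Fin.sum_univ_castSucc (f := w)]
    have h1 : ∀ j : Fin k, (((k+1 : ℕ) : ℝ) - ((j.castSucc : Fin (k+1)) : ℕ)) * yOf w j.castSucc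
        = ((k : ℝ) - (j : ℕ)) * yOf (w ∘ Fin.castSucc) j + yOf (w ∘ Fin.castSucc) j := by
      intro j
      rw [yOf_castSucc]
      push_cast [Fin.coe_castSucc]
      ring
    rw [Finset.sum_congr rfl (fun j _ => h1 j), Finset.sum_add_distrib, ih]
    have hsc : ∀ j : Fin k, (w ∘ Fin.castSucc) j = w j.castSucc := fun _ => rfl
    rw [Finset.sum_congr rfl (fun j _ => hsc j)]
    have hcoef : (((k+1 : ℕ) : ℝ) - ((Fin.last k : ℕ))) = 1 := by
      simp [Fin.last]
    rw [hcoef, one_mul]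
    rcases Nat.eq_zero_or_pos k with rfl | hk
    · simp [yOf]
    · obtain ⟨k', rfl⟩ : ∃ k', k = k' + 1 := ⟨k-1, by omega⟩
      rw [sum_yOf]
      have hlast : yOf w (Fin.last (k'+1)) = w (Fin.last (k'+1)) - w ⟨k', by omega⟩ := by
        unfold yOf
        rw [if_neg (by simp [Fin.last])]
        rfl
      have h2 : (w ∘ Fin.castSucc) (Fin.last k') = w ⟨k', by omega⟩ := rfl
      rw [hlast, h2]; ring

end AuxLemmas

/-- In any greedy run, the dual objective value of `y` equals the total
cost of the picked links: for each non-leaf node `u` of `T`,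
`Σ_𝒫 (|𝒫|−1)·y(𝒫) = Σ_j wgt(𝒫̂^j_u)` (the sum over the hatted partitions of `u`, all other
partitions carrying `y = 0`), and summing over all non-leaf nodes gives
`Σ_i cost(ℓ_i)`. -/
theorem dual_objective_equals_greedy_cost
    (G T : SimpleGraph V) (hV : 3 ≤ Fintype.card V) (hTG : T ≤ G) (hT : T.IsTree)
    (cost : Sym2 V → ℝ) (hcost : ∀ e ∈ links G T, 0 ≤ cost e)
    (m : ℕ) (ℓseq : Fin m → Sym2 V) (hrun : IsGreedyRun G T cost m ℓseq)
    (sig : (u : V) → Fin (nblocks T u - 1) → Fin m)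
    (hsig : ∀ u : V, NonLeaf T u → StrictMono (sig u) ∧
      ∀ i : Fin m, Crosses (curPtn T ℓseq (i : ℕ) u) (ℓseq i) ↔ ∃ j, sig u j = i)
    (w : (u : V) → Fin (nblocks T u - 1) → ℝ)
    (hw : ∀ (u : V) (j : Fin (nblocks T u - 1)),
      w u j = cost (ℓseq (sig u j)) /
        ((incSet T ℓseq ((sig u j : Fin m) : ℕ) (ℓseq (sig u j))).ncard : ℝ)) :
    (∀ u : V, NonLeaf T u →
      ∑ j : Fin (nblocks T u - 1),
          (((curPtn T ℓseq ((sig u j : Fin m) : ℕ) u).ncard : ℝ) - 1) * yOf (w u) j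
        = ∑ j : Fin (nblocks T u - 1), w u j) ∧
    ∑ u ∈ Finset.univ.filter (fun u : V => NonLeaf T u),
        ∑ j : Fin (nblocks T u - 1),
          (((curPtn T ℓseq ((sig u j : Fin m) : ℕ) u).ncard : ℝ) - 1) * yOf (w u) j
      = ∑ i : Fin m, cost (ℓseq i) := by
  obtain ⟨hinj, hlinks, hgreedy, hfinal⟩ := hrun
  have partA : ∀ u : V, NonLeaf T u →
      ∑ j : Fin (nblocks T u - 1),
          (((curPtn T ℓseq ((sig u j : Fin m) : ℕ) u).ncard : ℝ) - 1) * yOf (w u) j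
        = ∑ j : Fin (nblocks T u - 1), w u j := by
    intro u hu
    obtain ⟨hmono, hiff⟩ := hsig u hu
    have hmaster := master_count G T ℓseq hlinks u (sig u) hmono hiff
    have hkey : ∀ j : Fin (nblocks T u - 1),
        (((curPtn T ℓseq ((sig u j : Fin m) : ℕ) u).ncard : ℝ) - 1)
          = (((nblocks T u - 1 : ℕ) : ℝ) - ((j : ℕ) : ℝ)) := by
      intro j
      have h1 := hmaster ((sig u j : Fin m) : ℕ) (Nat.le_of_lt (sig u j).isLt)
      have hfe : Finset.univ.filter
          (fun j' : Fin (nblocks T u - 1) =>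
            ((sig u j' : Fin m) : ℕ) < ((sig u j : Fin m) : ℕ))
          = Finset.Iio j := by
        ext j'
        simp only [Finset.mem_filter, Finset.mem_univ, true_and, Finset.mem_Iio,
          ← Fin.lt_iff_val_lt_val, hmono.lt_iff_lt]
      rw [hfe, Fin.card_Iio] at h1
      have hnb : nblocks T u = (compPartition T u).ncard := rfl
      have hk1 : (curPtn T ℓseq ((sig u j : Fin m) : ℕ) u).ncard + (j : ℕ)
          = (nblocks T u - 1) + 1 := by
        have hjlt := j.isLt
        omega
      have hc := congrArg (fun n : ℕ => (n : ℝ)) hk1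
      push_cast at hc
      linarith
    rw [Finset.sum_congr rfl (fun j _ => by rw [hkey j])]
    exact sum_coeff_yOf (w u)
  refine ⟨partA, ?_⟩
  rw [Finset.sum_congr rfl (fun u hu => partA u (Finset.mem_filter.mp hu).2)]
  classical
  set t := (Finset.univ : Finset (Fin m)).sigma
      (fun i => Finset.univ.filter (fun u : V => u ∈ incSet T ℓseq (i : ℕ) (ℓseq i))) with ht
  have hmemt : ∀ q : (Σ _ : Fin m, V), q ∈ t → NonLeaf T q.2 ∧ ∃ j, sig q.2 j = q.1 := by
    intro q hq
    rw [ht, Finset.mem_sigma, Finset.mem_filter] at hq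
    have h2 : q.2 ∈ incSet T ℓseq ((q.1 : Fin m) : ℕ) (ℓseq q.1) := hq.2.2
    exact ⟨h2.1, ((hsig q.2 h2.1).2 q.1).mp h2.2⟩
  have hbij : ∑ u ∈ Finset.univ.filter (fun u : V => NonLeaf T u),
        ∑ j : Fin (nblocks T u - 1), w u j
      = ∑ q ∈ t, cost (ℓseq q.1) / ((incSet T ℓseq ((q.1 : Fin m) : ℕ) (ℓseq q.1)).ncard : ℝ) := by
    rw [Finset.sum_sigma']
    refine Finset.sum_bij' (fun p _ => (⟨sig p.1 p.2, p.1⟩ : Σ _ : Fin m, V))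
      (fun q hq => (⟨q.2, Classical.choose (hmemt q hq).2⟩ : Σ u : V, Fin (nblocks T u - 1)))
      ?_ ?_ ?_ ?_ ?_
    · rintro ⟨u, j⟩ hp
      rw [Finset.mem_sigma, Finset.mem_filter] at hp
      have hu : NonLeaf T u := hp.1.2
      rw [ht, Finset.mem_sigma, Finset.mem_filter]
      refine ⟨Finset.mem_univ _, Finset.mem_univ _, ?_⟩
      exact ⟨hu, ((hsig u hu).2 (sig u j)).mpr ⟨j, rfl⟩⟩
    · intro q hq
      rw [Finset.mem_sigma, Finset.mem_filter]
      exact ⟨⟨Finset.mem_univ _, (hmemt q hq).1⟩, Finset.mem_univ _⟩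
    · rintro ⟨u, j⟩ hp
      rw [Finset.mem_sigma, Finset.mem_filter] at hp
      have hu : NonLeaf T u := hp.1.2
      dsimp only
      refine Sigma.ext rfl (heq_of_eq ?_)
      generalize_proofs h1
      exact (hsig u hu).1.injective (Classical.choose_spec h1)
    · intro q hq
      dsimp only
      refine Sigma.ext ?_ (heq_of_eq rfl)
      generalize_proofs h1
      exact Classical.choose_spec h1
    · rintro ⟨u, j⟩ hp
      exact hw u j
  rw [hbij, ht, Finset.sum_sigma]
  refine Finset.sum_congr rfl (fun i _ => ?_)
  dsimp only
  rw [Finset.sum_const]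
  have hcard : (Finset.univ.filter (fun u : V => u ∈ incSet T ℓseq (i : ℕ) (ℓseq i))).card
      = (incSet T ℓseq (i : ℕ) (ℓseq i)).ncard := by
    rw [Set.ncard_eq_toFinset_card']
    congr 1
    ext u
    simp [Set.mem_toFinset]
  have hne : ((incSet T ℓseq (i : ℕ) (ℓseq i)).ncard : ℝ) ≠ 0 := by
    have hpos : 0 < (incSet T ℓseq (i : ℕ) (ℓseq i)).ncard :=
      (Set.ncard_pos (Set.toFinite _)).mpr (hgreedy i).1
    exact_mod_cast hpos.ne'
  rw [hcard, nsmul_eq_mul]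
  field_simp

end TwoNCTAP
end

section
/- Consider the 2NC-TAP instance with V = {r, v_1, v_2, v_3, p_1, p_2, p_3, q_1, q_2, q_3}, spanning tree T with edges r v_i, v_i p_i, and v_i q_i for i ∈ {1,2,3} (cost 0), and links p_i p_j and q_i q_j for 1 ≤ i < j ≤ 3, each of cost 1. Then every set F of links such that T ∪ F is 2-node-connected satisfies |F| ≥ 4; i.e., the optimal integral value of this instance is at least 4. -/
open scoped Classical
open Finset

namespace TwoNCTAP

variable {V : Type*}

/-- `H` is 2-node-connected: it has at least 3 nodes, is connected, and deleting any
single node leaves a connected graph. -/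
def TwoNodeConnected {W : Type*} [Fintype W] (H : SimpleGraph W) : Prop :=
  3 ≤ Fintype.card W ∧ H.Connected ∧
    ∀ u v w : W, v ≠ u → w ≠ u → (delVert H u).Reachable v w

lemma no_walk {G : SimpleGraph V} {a c : V} (h : ∀ b, ¬ G.Adj a b)
    (hr : G.Reachable a c) : a = c := by
  obtain ⟨w⟩ := hr
  cases w with
  | nil => rfl
  | cons h' _ => exact absurd h' (h _)

set_option maxHeartbeats 1000000 in
/-- Consider the 2NC-TAP instance with vertices
`r = 0`, `v_i = i`, `p_i = i + 3`, `q_i = i + 6` (`i ∈ {1,2,3}`), spanning tree `T` with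
edges `r v_i`, `v_i p_i`, `v_i q_i`, and unit-cost links `p_i p_j`, `q_i q_j` for
`1 ≤ i < j ≤ 3`. Every set `F` of links such that `T ∪ F` is 2-node-connected satisfies
`|F| ≥ 4`; i.e., the optimal integral value of this instance is at least `4`. -/
theorem integral_optimum_at_least_four
    (T : SimpleGraph (Fin 10))
    (hT : T = SimpleGraph.fromEdgeSet
      {s((0 : Fin 10), 1), s((0 : Fin 10), 2), s((0 : Fin 10), 3),
       s((1 : Fin 10), 4), s((2 : Fin 10), 5), s((3 : Fin 10), 6),
       s((1 : Fin 10), 7), s((2 : Fin 10), 8), s((3 : Fin 10), 9)})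
    (Lk : Set (Sym2 (Fin 10)))
    (hLk : Lk = {s((4 : Fin 10), 5), s((4 : Fin 10), 6), s((5 : Fin 10), 6),
                 s((7 : Fin 10), 8), s((7 : Fin 10), 9), s((8 : Fin 10), 9)})
    (F : Set (Sym2 (Fin 10))) (hF : F ⊆ Lk)
    (h2nc : TwoNodeConnected (withLinks T F)) :
    4 ≤ F.ncard := by
  have key : ∀ x u : Fin 10, x ≠ u → (0 : Fin 10) ≠ u → x ≠ 0 →
      (∀ b : Fin 10, b ≠ u → ¬ T.Adj x b) → ∃ b, s(x, b) ∈ F := by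
    intro x u hxu h0u hx0 hTb
    by_contra hc
    push_neg at hc
    have hr := h2nc.2.2 u x 0 hxu h0u
    refine hx0 (no_walk ?_ hr)
    rintro b ⟨hadj, -, hb1⟩
    rw [withLinks, SimpleGraph.sup_adj, SimpleGraph.fromEdgeSet_adj] at hadj
    rcases hadj with hTa | hFa
    · exact hTb b hb1 hTa
    · exact hc b hFa.1
  have h4 : s((4:Fin 10),5) ∈ F ∨ s((4:Fin 10),6) ∈ F := by
    obtain ⟨b, hb⟩ := key 4 1 (by decide) (by decide) (by decide) (by
      intro b hb1 hTa; rw [hT] at hTa; simp [Sym2.eq_iff] at hTa; exact hb1 hTa.1)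
    have hm := hF hb
    rw [hLk] at hm
    simp [Sym2.eq_iff] at hm
    rcases hm with rfl | rfl
    · exact Or.inl hb
    · exact Or.inr hb
  have h5 : s((4:Fin 10),5) ∈ F ∨ s((5:Fin 10),6) ∈ F := by
    obtain ⟨b, hb⟩ := key 5 2 (by decide) (by decide) (by decide) (by
      intro b hb1 hTa; rw [hT] at hTa; simp [Sym2.eq_iff] at hTa; exact hb1 hTa.1)
    have hm := hF hb
    rw [hLk] at hm
    simp [Sym2.eq_iff] at hm
    rcases hm with rfl | rfl
    · exact Or.inl (by rwa [Sym2.eq_swap])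
    · exact Or.inr hb
  have h6 : s((4:Fin 10),6) ∈ F ∨ s((5:Fin 10),6) ∈ F := by
    obtain ⟨b, hb⟩ := key 6 3 (by decide) (by decide) (by decide) (by
      intro b hb1 hTa; rw [hT] at hTa; simp [Sym2.eq_iff] at hTa; exact hb1 hTa.1)
    have hm := hF hb
    rw [hLk] at hm
    simp [Sym2.eq_iff] at hm
    rcases hm with rfl | rfl
    · exact Or.inl (by rwa [Sym2.eq_swap])
    · exact Or.inr (by rwa [Sym2.eq_swap])
  have h7 : s((7:Fin 10),8) ∈ F ∨ s((7:Fin 10),9) ∈ F := by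
    obtain ⟨b, hb⟩ := key 7 1 (by decide) (by decide) (by decide) (by
      intro b hb1 hTa; rw [hT] at hTa; simp [Sym2.eq_iff] at hTa; exact hb1 hTa.1)
    have hm := hF hb
    rw [hLk] at hm
    simp [Sym2.eq_iff] at hm
    rcases hm with rfl | rfl
    · exact Or.inl hb
    · exact Or.inr hb
  have h8 : s((7:Fin 10),8) ∈ F ∨ s((8:Fin 10),9) ∈ F := by
    obtain ⟨b, hb⟩ := key 8 2 (by decide) (by decide) (by decide) (by
      intro b hb1 hTa; rw [hT] at hTa; simp [Sym2.eq_iff] at hTa; exact hb1 hTa.1)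
    have hm := hF hb
    rw [hLk] at hm
    simp [Sym2.eq_iff] at hm
    rcases hm with rfl | rfl
    · exact Or.inl (by rwa [Sym2.eq_swap])
    · exact Or.inr hb
  have h9 : s((7:Fin 10),9) ∈ F ∨ s((8:Fin 10),9) ∈ F := by
    obtain ⟨b, hb⟩ := key 9 3 (by decide) (by decide) (by decide) (by
      intro b hb1 hTa; rw [hT] at hTa; simp [Sym2.eq_iff] at hTa; exact hb1 hTa.1)
    have hm := hF hb
    rw [hLk] at hm
    simp [Sym2.eq_iff] at hm
    rcases hm with rfl | rfl
    · exact Or.inl (by rwa [Sym2.eq_swap])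
    · exact Or.inr (by rwa [Sym2.eq_swap])
  have hfin : F.Finite := Set.toFinite F
  have count : ∀ a b c d : Sym2 (Fin 10), a ≠ b → a ≠ c → a ≠ d → b ≠ c → b ≠ d → c ≠ d →
      a ∈ F → b ∈ F → c ∈ F → d ∈ F → 4 ≤ F.ncard := by
    intro a b c d hab hac had hbc hbd hcd ha hb hc hd
    have hsub : (↑({a, b, c, d} : Finset (Sym2 (Fin 10))) : Set (Sym2 (Fin 10))) ⊆ F := by
      intro x hx
      simp only [Finset.coe_insert, Finset.coe_singleton, Set.mem_insert_iff,
        Set.mem_singleton_iff] at hx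
      rcases hx with rfl | rfl | rfl | rfl <;> assumption
    have hle := Set.ncard_le_ncard hsub hfin
    rwa [Set.ncard_coe_finset, Finset.card_insert_of_notMem (by simp [hab, hac, had]),
      Finset.card_insert_of_notMem (by simp [hbc, hbd]),
      Finset.card_insert_of_notMem (by simp [hcd]), Finset.card_singleton] at hle
  have hp : (s((4:Fin 10),5) ∈ F ∧ s((4:Fin 10),6) ∈ F) ∨
      (s((4:Fin 10),5) ∈ F ∧ s((5:Fin 10),6) ∈ F) ∨
      (s((4:Fin 10),6) ∈ F ∧ s((5:Fin 10),6) ∈ F) := by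
    rcases h4 with a | a
    · rcases h6 with c | c
      · exact Or.inl ⟨a, c⟩
      · exact Or.inr (Or.inl ⟨a, c⟩)
    · rcases h5 with b | b
      · exact Or.inl ⟨b, a⟩
      · exact Or.inr (Or.inr ⟨a, b⟩)
  have hq : (s((7:Fin 10),8) ∈ F ∧ s((7:Fin 10),9) ∈ F) ∨
      (s((7:Fin 10),8) ∈ F ∧ s((8:Fin 10),9) ∈ F) ∨
      (s((7:Fin 10),9) ∈ F ∧ s((8:Fin 10),9) ∈ F) := by
    rcases h7 with a | a
    · rcases h9 with c | c
      · exact Or.inl ⟨a, c⟩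
      · exact Or.inr (Or.inl ⟨a, c⟩)
    · rcases h8 with b | b
      · exact Or.inl ⟨b, a⟩
      · exact Or.inr (Or.inr ⟨a, b⟩)
  rcases hp with ⟨ha, hb⟩ | ⟨ha, hb⟩ | ⟨ha, hb⟩ <;>
    rcases hq with ⟨hc, hd⟩ | ⟨hc, hd⟩ | ⟨hc, hd⟩ <;>
    exact count _ _ _ _ (by decide) (by decide) (by decide) (by decide) (by decide)
      (by decide) ha hb hc hd

end TwoNCTAP
end

section
/- Let n ≥ 4 and let G be the graph on nodes {r, u_1, …, u_{n−1}} consisting of the spanning star T = K_{1,n−1} with center r and leaves u_1, …, u_{n−1} (tree edges of cost 0), together with the n−1 unit-cost links u_i u_{i+1} for i ∈ [n−2] and u_{n−1} u_1 (forming a cycle on the leaves of T). Then every set F of links such that T ∪ F is 2-node-connected satisfies |F| ≥ n−2; i.e., every integral feasible solution of this 2NC-TAP instance has cost at least n−2. -/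
open scoped Classical
open Finset

namespace TwoNCTAP

variable {V : Type*}

lemma exists_adj_dist_lt {W : Type*} (G : SimpleGraph W) {v r : W} (hv : v ≠ r)
    (h : G.Reachable v r) : ∃ w, G.Adj v w ∧ G.dist w r < G.dist v r := by
  obtain ⟨p, hp⟩ := h.exists_walk_length_eq_dist
  cases p with
  | nil => exact absurd rfl hv
  | cons hadj q =>
    refine ⟨_, hadj, ?_⟩
    have h1 := G.dist_le q
    simp only [SimpleGraph.Walk.length_cons] at hp
    omega

lemma card_le_card_edgeFinset {W : Type*} [Fintype W] (G : SimpleGraph W)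
    [Fintype G.edgeSet] (r : W) (S : Finset W)
    (hrS : r ∉ S) (hreach : ∀ v ∈ S, G.Reachable v r) :
    S.card ≤ G.edgeFinset.card := by
  have key : ∀ v ∈ S, ∃ w, G.Adj v w ∧ G.dist w r < G.dist v r := fun v hv =>
    exists_adj_dist_lt G (ne_of_mem_of_not_mem hv hrS) (hreach v hv)
  choose! nxt hadj hlt using key
  apply Finset.card_le_card_of_injOn (fun v => s(v, nxt v))
  · intro v hv
    simp only [Finset.mem_coe, SimpleGraph.mem_edgeFinset, SimpleGraph.mem_edgeSet]
    exact hadj v hv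
  · intro a ha b hb hab
    simp only [Sym2.eq, Sym2.rel_iff', Prod.mk.injEq, Prod.swap_prod_mk] at hab
    rcases hab with ⟨h1, -⟩ | ⟨h1, h2⟩
    · exact h1
    · exfalso
      have l1 := hlt a ha
      have l2 := hlt b hb
      rw [← h1] at l2
      rw [h2] at l1
      omega

/-- For the 2NC-TAP instance whose tree is the star `K_{1,n−1}` with
center `r = 0` and leaves `u_1, …, u_{n−1}` (here `1, …, n−1 : Fin n`), and whose links
form the cycle `u_1 u_2, …, u_{n−2} u_{n−1}, u_{n−1} u_1` on the leaves, every set `F` of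
links such that `T ∪ F` is 2-node-connected satisfies `|F| ≥ n − 2`. -/
theorem star_instance_integral_lower_bound
    (n : ℕ) (hn : 4 ≤ n)
    (T : SimpleGraph (Fin n))
    (hT : T = SimpleGraph.fromEdgeSet
      {e | ∃ r i : Fin n, (r : ℕ) = 0 ∧ 1 ≤ (i : ℕ) ∧ e = s(r, i)})
    (Lk : Set (Sym2 (Fin n)))
    (hLk : Lk = {e | (∃ i j : Fin n, 1 ≤ (i : ℕ) ∧ (i : ℕ) ≤ n - 2 ∧
          (j : ℕ) = (i : ℕ) + 1 ∧ e = s(i, j)) ∨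
        (∃ a b : Fin n, (a : ℕ) = n - 1 ∧ (b : ℕ) = 1 ∧ e = s(a, b))})
    (F : Set (Sym2 (Fin n))) (hF : F ⊆ Lk)
    (h2nc : TwoNodeConnected (withLinks T F)) :
    n - 2 ≤ F.ncard := by
  classical
  haveI : NeZero n := ⟨by omega⟩
  set D := delVert (withLinks T F) (0 : Fin n) with hD
  -- edges of D lie in F
  have hsub : D.edgeSet ⊆ F := by
    intro e he
    induction e using Sym2.ind with
    | _ a b =>
      rw [SimpleGraph.mem_edgeSet] at he
      obtain ⟨hab, ha, hb⟩ := he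
      rcases hab with hTab | hFab
      · exfalso
        rw [hT, SimpleGraph.fromEdgeSet_adj] at hTab
        obtain ⟨⟨r0, i, hr0, -, hee⟩, -⟩ := hTab
        have hr0' : r0 = 0 := Fin.ext (by simpa using hr0)
        rw [Sym2.eq, Sym2.rel_iff'] at hee
        rcases hee with h | h
        · exact ha (by rw [Prod.mk.injEq] at h; rw [h.1, hr0'])
        · exact hb (by rw [Prod.mk.injEq, Prod.swap_prod_mk] at h
                       rw [h.2, hr0'])
      · exact hFab.1
  have hcard1 : D.edgeFinset.card ≤ F.ncard := by
    rw [Set.ncard_eq_toFinset_card' F]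
    apply Finset.card_le_card
    intro e he
    rw [Set.mem_toFinset]
    exact hsub (SimpleGraph.mem_edgeFinset.mp he)
  have h10 : (1 : Fin n) ≠ 0 := by
    have : ((1 : Fin n) : ℕ) = 1 := by
      rw [Fin.val_one']
      exact Nat.mod_eq_of_lt (by omega)
    intro h
    rw [h] at this
    simp at this
  set S : Finset (Fin n) := ({0, 1} : Finset (Fin n))ᶜ with hS
  have hScard : S.card = n - 2 := by
    rw [hS, Finset.card_compl, Finset.card_insert_of_notMem (by simp [h10.symm]),
      Finset.card_singleton, Fintype.card_fin]
  have h1S : (1 : Fin n) ∉ S := by simp [hS]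
  have hreach : ∀ v ∈ S, D.Reachable v 1 := by
    intro v hv
    simp only [hS, Finset.mem_compl, Finset.mem_insert, Finset.mem_singleton, not_or] at hv
    exact h2nc.2.2 0 v 1 hv.1 h10
  calc n - 2 = S.card := hScard.symm
    _ ≤ D.edgeFinset.card := card_le_card_edgeFinset D 1 S h1S hreach
    _ ≤ F.ncard := hcard1

end TwoNCTAP
end
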